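/- arXiv:2104.01880 — 4 statements merged into one kernel-verified Lean document; each statement's English description precedes it below -/
import Mathlib

section
/- For every real number u > 0 and every x in the closed interval [0,1], the Fourier expansion u·cosh((x−1/2)u)/(2·sinh(u/2)) = 1 + 2·Σ_{m=1}^{∞} u²·cos(2πmx)/(u² + 4π²m²) holds. -/
open Real Complex intervalIntegral

lemma alg_aux' (A B c d v U : ℂ) (hc : c ≠ 0) (hd : d ≠ 0) (hAB : A * B = 1)
    (h1 : d - c = -(2*v)) (h2 : U = -(c*d)) :
    B/2*((A*A-1)/c) + A/2*((B*B-1)/d) = 2*v*((A-B)/2)/U := by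
  rw [h2]
  have hcd : -(c*d) ≠ 0 := by simpa using mul_ne_zero hc hd
  rw [show B / 2 * ((A * A - 1) / c) = B * (A*A-1) / (2*c) by ring,
    show A / 2 * ((B * B - 1) / d) = A * (B*B-1) / (2*d) by ring,
    div_add_div _ _ (mul_ne_zero two_ne_zero hc) (mul_ne_zero two_ne_zero hd),
    div_eq_div_iff (by exact mul_ne_zero (mul_ne_zero two_ne_zero hc) (mul_ne_zero two_ne_zero hd)) hcd]
  linear_combination (-(c*d)*2*(A*d + B*c))*hAB + (-(c*d)*2*(A-B))*h1

lemma alg_aux (A c d v U : ℂ) (hA : A ≠ 0) (hc : c ≠ 0) (hd : d ≠ 0)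
    (h1 : d - c = -(2*v)) (h2 : U = -(c*d)) :
    A⁻¹/2*((A*A-1)/c) + A/2*((A⁻¹*A⁻¹-1)/d) = 2*v*((A-A⁻¹)/2)/U :=
  alg_aux' A A⁻¹ c d v U hc hd (mul_inv_cancel₀ hA) h1 h2

lemma coeff_eq (u : ℝ) (hu : 0 < u) (n : ℤ) :
    fourierCoeffOn (zero_lt_one) (fun x : ℝ => Complex.cosh ((x - 1/2) * u)) n
      = 2 * u * Complex.sinh (u / 2) / (u ^ 2 + 4 * π ^ 2 * n ^ 2) := by
  have hπ := Real.pi_pos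
  have hc1 : (u : ℂ) - 2 * π * I * n ≠ 0 := by
    intro h
    have := congrArg Complex.re h
    simp [Complex.ext_iff] at this
    exact hu.ne' (by exact_mod_cast this)
  have hc2 : -(u : ℂ) - 2 * π * I * n ≠ 0 := by
    intro h
    have := congrArg Complex.re h
    simp [Complex.ext_iff] at this
    exact hu.ne (by exact_mod_cast this.symm)
  have hexp : ((u:ℂ) ^ 2 + 4 * π ^ 2 * n ^ 2) = -(((u : ℂ) - 2 * π * I * n) * (-(u : ℂ) - 2 * π * I * n)) := by
    ring_nf
    rw [Complex.I_sq]
    ring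
  have hden : ((u:ℂ) ^ 2 + 4 * π ^ 2 * n ^ 2) ≠ 0 := by
    rw [hexp]; simpa using mul_ne_zero hc1 hc2
  rw [fourierCoeffOn_eq_integral]
  have key : ∀ A B C : ℂ, (Complex.exp A + Complex.exp B)/2 * Complex.exp C
      = Complex.exp (A+C)/2 + Complex.exp (B+C)/2 := by
    intro A B C; rw [Complex.exp_add, Complex.exp_add]; ring
  have key2 : ∀ X Y X' Y' : ℂ, X = X' → Y = Y' →
      Complex.exp X / 2 + Complex.exp Y / 2
        = Complex.exp X' / 2 * 1 + Complex.exp Y' / 2 * 1 := by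
    rintro X Y X' Y' rfl rfl; ring
  have hint : ∀ x : ℝ, (fourier (-n)) (x : AddCircle (1 - 0 : ℝ)) • Complex.cosh ((x - 1/2) * u)
      = (Complex.exp (-(u:ℂ)/2) / 2) * Complex.exp (((u:ℂ) - 2 * π * I * n) * x)
        + (Complex.exp ((u:ℂ)/2) / 2) * Complex.exp ((-(u:ℂ) - 2 * π * I * n) * x) := by
    intro x
    rw [fourier_coe_apply, smul_eq_mul]
    have h2 := Complex.two_cosh (((x:ℂ) - 1/2) * u)
    have hcosh : Complex.cosh (((x:ℂ) - 1/2) * u)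
        = (Complex.exp (((x:ℂ) - 1/2) * u) + Complex.exp (-(((x:ℂ) - 1/2) * u))) / 2 := by
      field_simp at h2 ⊢; linear_combination h2
    push_cast
    rw [hcosh, mul_comm, key,
      show (Complex.exp (-(u:ℂ)/2) / 2) * Complex.exp (((u:ℂ) - 2 * π * I * n) * x)
        = Complex.exp (-(u:ℂ)/2 + ((u:ℂ) - 2 * π * I * n) * x) / 2 * 1 by
          rw [Complex.exp_add]; ring,
      show (Complex.exp ((u:ℂ)/2) / 2) * Complex.exp ((-(u:ℂ) - 2 * π * I * n) * x)
        = Complex.exp ((u:ℂ)/2 + (-(u:ℂ) - 2 * π * I * n) * x) / 2 * 1 by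
          rw [Complex.exp_add]; ring]
    exact key2 _ _ _ _ (by push_cast; ring) (by push_cast; ring)
  simp_rw [hint]
  rw [intervalIntegral.integral_add
      (by apply Continuous.intervalIntegrable; fun_prop)
      (by apply Continuous.intervalIntegrable; fun_prop),
    intervalIntegral.integral_const_mul, intervalIntegral.integral_const_mul,
    integral_exp_mul_complex hc1, integral_exp_mul_complex hc2]
  push_cast
  rw [mul_one, mul_one, mul_zero, mul_zero, Complex.exp_zero]
  have e1 : Complex.exp ((u:ℂ) - 2 * π * I * n) = Complex.exp (u:ℂ) := by
    rw [show (u:ℂ) - 2 * π * I * n = u + (-n : ℤ) * (2 * π * I) by push_cast; ring,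
      Complex.exp_add, Complex.exp_int_mul_two_pi_mul_I, mul_one]
  have e2 : Complex.exp (-(u:ℂ) - 2 * π * I * n) = Complex.exp (-(u:ℂ)) := by
    rw [show -(u:ℂ) - 2 * π * I * n = -u + (-n : ℤ) * (2 * π * I) by push_cast; ring,
      Complex.exp_add, Complex.exp_int_mul_two_pi_mul_I, mul_one]
  rw [e1, e2]
  have hA : Complex.exp ((u:ℂ)/2) ≠ 0 := Complex.exp_ne_zero _
  have hBA : Complex.exp (-(u:ℂ)/2) = (Complex.exp ((u:ℂ)/2))⁻¹ := by
    rw [show -(u:ℂ)/2 = -((u:ℂ)/2) by ring, Complex.exp_neg]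
  have hU : Complex.exp ((u:ℂ)) = Complex.exp ((u:ℂ)/2) * Complex.exp ((u:ℂ)/2) := by
    rw [← Complex.exp_add]; ring_nf
  have hNU : Complex.exp (-(u:ℂ)) = (Complex.exp ((u:ℂ)/2))⁻¹ * (Complex.exp ((u:ℂ)/2))⁻¹ := by
    rw [show -(u:ℂ) = -((u:ℂ)/2) + -((u:ℂ)/2) by ring, Complex.exp_add, Complex.exp_neg]
  have hS : Complex.sinh ((u:ℂ)/2) = (Complex.exp ((u:ℂ)/2) - (Complex.exp ((u:ℂ)/2))⁻¹)/2 := by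
    have h3 := Complex.two_sinh ((u:ℂ)/2)
    rw [Complex.exp_neg] at h3
    field_simp at h3 ⊢
    linear_combination h3
  push_cast
  rw [hBA, hU, hNU, hS]
  norm_num
  exact alg_aux _ _ _ _ _ hA hc1 hc2 (by ring) hexp



lemma summable_den (u : ℝ) (hu : 0 < u) :
    Summable (fun n : ℤ => 1 / (u ^ 2 + 4 * π ^ 2 * (n : ℝ) ^ 2)) := by
  have hπ := Real.pi_pos
  have hnat : Summable (fun n : ℕ => 1 / (u ^ 2 + 4 * π ^ 2 * (n : ℝ) ^ 2)) := by
    rw [← summable_nat_add_iff 1]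
    have hbase : Summable (fun n : ℕ => 1 / ((n : ℝ) + 1) ^ 2) := by
      have h0 : Summable (fun n : ℕ => 1 / ((n : ℝ)) ^ 2) :=
        Real.summable_one_div_nat_pow.mpr one_lt_two
      have := (summable_nat_add_iff 1).mpr h0
      refine this.congr fun n => by push_cast; ring
    refine Summable.of_nonneg_of_le (fun n => by positivity) (fun n => ?_)
      (hbase.mul_left (1 / (4 * π ^ 2)))
    have h1 : (4 : ℝ) * π ^ 2 * ((n:ℝ) + 1) ^ 2 ≤ u ^ 2 + 4 * π ^ 2 * ((n:ℝ)+1) ^ 2 := by nlinarith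
    calc 1 / (u ^ 2 + 4 * π ^ 2 * ((n:ℕ)+1 : ℕ) ^ 2)
        = 1 / (u ^ 2 + 4 * π ^ 2 * ((n:ℝ)+1) ^ 2) := by push_cast; ring_nf
      _ ≤ 1 / (4 * π ^ 2 * ((n:ℝ)+1) ^ 2) := by
          apply one_div_le_one_div_of_le (by positivity) h1
      _ = 1 / (4 * π ^ 2) * (1 / ((n:ℝ)+1) ^ 2) := by rw [one_div_mul_one_div]
  refine Summable.of_nat_of_neg (hnat.congr fun n => by norm_num) (hnat.congr fun n => by push_cast; ring_nf)



lemma fourierCoeffOn_congr' {a b b' : ℝ} (h : b = b') (hab : a < b) (hab' : a < b')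
    (f : ℝ → ℂ) (n : ℤ) : fourierCoeffOn hab f n = fourierCoeffOn hab' f n := by
  subst h; rfl

lemma key_hassum (u : ℝ) (hu : 0 < u) (y : ℝ) (hy : y ∈ Set.Ico (0:ℝ) 1)
    (hcoeffval : ∀ n : ℤ, fourierCoeffOn (zero_lt_one) (fun x : ℝ => Complex.cosh ((x - 1/2) * u)) n
      = 2 * u * Complex.sinh (u / 2) / (u ^ 2 + 4 * π ^ 2 * n ^ 2))
    (hsummable : Summable (fun n : ℤ => 1 / (u ^ 2 + 4 * π ^ 2 * (n : ℝ) ^ 2))) :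
    HasSum (fun m : ℕ => 2 * (u ^ 2 * Real.cos (2 * π * (m + 1) * y) / (u ^ 2 + 4 * π ^ 2 * ((m:ℝ) + 1) ^ 2)))
      (u * Real.cosh ((y - 1/2) * u) / (2 * Real.sinh (u / 2)) - 1) := by
  have hπ := Real.pi_pos
  have hS : 0 < Real.sinh (u / 2) := Real.sinh_pos_iff.mpr (by positivity)
  set g : ℝ → ℂ := fun t => Complex.cosh ((t - 1/2) * u) with hg
  haveI : Fact (0 < (1:ℝ)) := ⟨one_pos⟩
  have hends : g 0 = g 1 := by
    simp only [hg]
    rw [show ((0:ℝ) - 1/2 : ℂ) * u = -(((1:ℝ) - 1/2) * u) by push_cast; ring, Complex.cosh_neg]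
  set F : C(AddCircle (1:ℝ), ℂ) :=
    ⟨AddCircle.liftIco 1 0 g, AddCircle.liftIco_zero_continuous hends
      ((Continuous.continuousOn (by fun_prop)))⟩ with hF
  -- real coefficient function
  set r : ℤ → ℝ := fun n => 2 * u * Real.sinh (u / 2) / (u ^ 2 + 4 * π ^ 2 * (n:ℝ) ^ 2) with hr
  have hcoeff : ∀ n : ℤ, fourierCoeff (⇑F) n = ((r n : ℝ) : ℂ) := by
    intro n
    have h1 : fourierCoeff (⇑F) n = fourierCoeffOn (lt_add_of_pos_right (0:ℝ) (Fact.out : (0:ℝ) < 1)) g n := by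
      exact fourierCoeff_liftIco_eq (T := (1:ℝ)) g n
    rw [h1, fourierCoeffOn_congr' (by norm_num) _ zero_lt_one, hcoeffval n, hr]
    push_cast [Complex.ofReal_sinh]
    norm_num
  have hsum : Summable (fourierCoeff (⇑F)) := by
    apply Summable.congr _ (fun n => (hcoeff n).symm)
    rw [Complex.summable_ofReal]
    exact (hsummable.mul_left (2 * u * Real.sinh (u/2))).congr fun n => by rw [hr]; ring
  have hp := has_pointwise_sum_fourier_series_of_summable hsum ((y : ℝ) : AddCircle (1:ℝ))
  have hy' : y ∈ Set.Ico (0:ℝ) (0+1) := by simpa using hy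
  have hFy : F ((y : ℝ) : AddCircle (1:ℝ)) = g y :=
    AddCircle.liftIco_coe_apply (p := (1:ℝ)) (a := 0) (f := g) hy'
  rw [hFy] at hp
  -- rewrite terms
  have hterm : ∀ i : ℤ, fourierCoeff (⇑F) i • fourier i (y : AddCircle (1:ℝ))
      = ((r i : ℝ) : ℂ) * Complex.exp ((2 * π * i * y : ℝ) * I) := by
    intro i
    rw [hcoeff i, fourier_coe_apply, smul_eq_mul]
    congr 1
    push_cast
    ring
  simp_rw [hterm] at hp
  have hp2 := hp.nat_add_neg
  have hp2' : HasSum (fun n : ℕ => ((2 * r (n:ℤ) * Real.cos (2 * π * n * y) : ℝ) : ℂ))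
      (g y + ((r 0 : ℝ) : ℂ)) := by
    convert hp2 using 2 with n
    · have hrn : r (-(n:ℤ)) = r (n:ℤ) := by rw [hr]; push_cast; ring_nf
      rw [hrn]
      rw [show ((2 * π * ((-(n:ℤ)):ℤ) * y : ℝ) : ℂ) = (-((2 * π * (n:ℤ) * y : ℝ) : ℂ)) by push_cast; ring]
      rw [Complex.exp_mul_I, Complex.exp_mul_I, Complex.cos_neg, Complex.sin_neg]
      push_cast
      ring_nf
    · norm_num
  have hp3 := (hasSum_nat_add_iff' (f := fun n : ℕ => ((2 * r (n:ℤ) * Real.cos (2 * π * n * y) : ℝ) : ℂ)) 1).mpr hp2'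
  simp only [Finset.range_one, Finset.sum_singleton] at hp3
  -- turn into real
  have hgy : g y + ((r 0 : ℝ) : ℂ) - ((2 * r (0:ℤ) * Real.cos (2 * π * (0:ℕ) * y) : ℝ) : ℂ)
      = ((Real.cosh ((y - 1/2) * u) - r 0 : ℝ) : ℂ) := by
    rw [hg]
    push_cast [Complex.ofReal_cosh]
    norm_num
    ring
  norm_num at hp3
  rw [show g y + ((r 0 : ℝ):ℂ) - 2 * ((r 0 : ℝ):ℂ)
      = ((Real.cosh ((y - 1/2) * u) - r 0 : ℝ) : ℂ) by
    rw [hg]; push_cast [Complex.ofReal_cosh]; ring] at hp3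
  have hp4 : HasSum (fun n : ℕ => 2 * r ((n:ℤ) + 1) * Real.cos (2 * π * ((n:ℝ) + 1) * y))
      (Real.cosh ((y - 1/2) * u) - r 0) := by
    rw [← Complex.hasSum_ofReal]
    convert hp3 using 2 with n
    · rfl
    push_cast
    rfl
  have hp5 := hp4.mul_left (u / (2 * Real.sinh (u/2)))
  have hfun : (fun m : ℕ => u / (2 * Real.sinh (u/2)) * (2 * r ((m:ℤ)+1) * Real.cos (2*π*((m:ℝ)+1)*y)))
      = fun m : ℕ => 2 * (u^2 * Real.cos (2 * π * ((m:ℝ) + 1) * y) / (u^2 + 4*π^2*((m:ℝ)+1)^2)) := by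
    funext m
    rw [hr]
    have hden : (0:ℝ) < u ^ 2 + 4 * π ^ 2 * ((m:ℤ)+1:ℤ)^2 := by positivity
    push_cast
    field_simp
  have hval : u / (2*Real.sinh (u/2)) * (Real.cosh ((y-1/2)*u) - r 0)
      = u * Real.cosh ((y-1/2)*u)/(2*Real.sinh (u/2)) - 1 := by
    rw [hr]
    field_simp
    ring
  rw [hfun, hval] at hp5
  exact hp5

/-- For every real `u > 0` and every `x ∈ [0,1]`,
`u cosh((x-1/2)u) / (2 sinh(u/2)) = 1 + 2 ∑_{m ≥ 1} u² cos(2πmx) / (u² + 4π²m²)`. -/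
theorem cosh_div_sinh_fourier (u : ℝ) (hu : 0 < u)
    (x : ℝ) (hx : x ∈ Set.Icc (0 : ℝ) 1) :
    u * Real.cosh ((x - 1/2) * u) / (2 * Real.sinh (u / 2))
      = 1 + 2 * ∑' m : ℕ,
          u ^ 2 * Real.cos (2 * π * (m + 1) * x) / (u ^ 2 + 4 * π ^ 2 * (m + 1 : ℝ) ^ 2) := by
  have hπ := Real.pi_pos
  have key : ∀ y : ℝ, y ∈ Set.Ico (0:ℝ) 1 →
      u * Real.cosh ((y - 1/2) * u) / (2 * Real.sinh (u / 2))
      = 1 + 2 * ∑' m : ℕ,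
          u ^ 2 * Real.cos (2 * π * (m + 1) * y) / (u ^ 2 + 4 * π ^ 2 * (m + 1 : ℝ) ^ 2) := by
    intro y hy
    have h := key_hassum u hu y hy (coeff_eq u hu) (summable_den u hu)
    have h2 := (h.mul_left (1/2)).tsum_eq
    have h3 : ∑' m : ℕ, u ^ 2 * Real.cos (2 * π * (m + 1) * y) / (u ^ 2 + 4 * π ^ 2 * ((m:ℝ) + 1) ^ 2)
        = 1/2 * (u * Real.cosh ((y - 1/2) * u) / (2 * Real.sinh (u / 2)) - 1) := by
      rw [← h2]
      apply tsum_congr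
      intro m
      ring
    rw [h3]
    ring
  rcases eq_or_lt_of_le hx.2 with h1 | h1
  · -- x = 1 : reduce to y = 0
    have h0 := key 0 ⟨le_refl 0, one_pos⟩
    have hcos : ∀ m : ℕ, Real.cos (2 * π * ((m:ℝ) + 1) * x) = Real.cos (2 * π * ((m:ℝ) + 1) * 0) := by
      intro m
      rw [h1, mul_one, mul_zero, Real.cos_zero,
        show 2 * π * ((m:ℝ)+1) = ((m+1 : ℕ):ℝ) * (2*π) by push_cast; ring,
        Real.cos_nat_mul_two_pi]
    have hcos' : ∀ m : ℕ, u ^ 2 * Real.cos (2 * π * ((m:ℝ) + 1) * x) / (u ^ 2 + 4 * π ^ 2 * ((m:ℝ) + 1) ^ 2)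
        = u ^ 2 * Real.cos (2 * π * ((m:ℝ) + 1) * 0) / (u ^ 2 + 4 * π ^ 2 * ((m:ℝ) + 1) ^ 2) := by
      intro m; rw [hcos m]
    have hcosh : Real.cosh ((x - 1/2) * u) = Real.cosh (((0:ℝ) - 1/2) * u) := by
      rw [h1, show ((1:ℝ) - 1/2) * u = -(((0:ℝ) - 1/2) * u) by ring, Real.cosh_neg]
    rw [hcosh, tsum_congr hcos']
    exact h0
  · exact key x ⟨hx.1, h1⟩
end

section
/- For every real number u with |u| < 2π (u ≠ 0) and every real number x, one has u·cosh((x−1/2)u)/(2·sinh(u/2)) = Σ_{k=0}^{∞} (B_{2k}(x)/(2k)!)·u^{2k}. -/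
open Real Finset

/-- Evaluation at a real `x` of the `n`-th Bernoulli polynomial, defined by the generating
function `∑_{n ≥ 0} (Bₙ(x)/n!) tⁿ = t e^{tx}/(eᵗ - 1)` for `|t| < 2π`. -/
noncomputable def bernoulliPoly (n : ℕ) (x : ℝ) : ℝ :=
  ((Polynomial.bernoulli n).map (algebraMap ℚ ℝ)).eval x


lemma bernoulliPoly_eq (n : ℕ) (x : ℝ) :
    bernoulliPoly n x
      = ∑ i ∈ range (n + 1), (bernoulli i : ℝ) * (n.choose i : ℝ) * x ^ (n - i) := by
  unfold bernoulliPoly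
  rw [Polynomial.bernoulli, Polynomial.map_sum, Polynomial.eval_finset_sum]
  refine Finset.sum_congr rfl fun i _ => ?_
  rw [Polynomial.map_monomial, Polynomial.eval_monomial]
  push_cast [eq_ratCast]
  ring

lemma zeta_le_two {k : ℕ} (hk : k ≠ 0) : ∑' n : ℕ, 1 / (n : ℝ) ^ (2 * k) ≤ 2 := by
  have h2 : (∑' n : ℕ, 1 / (n : ℝ) ^ 2) = π ^ 2 / 6 := hasSum_zeta_two.tsum_eq
  have hle : ∑' n : ℕ, 1 / (n : ℝ) ^ (2 * k) ≤ ∑' n : ℕ, 1 / (n : ℝ) ^ 2 := by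
    refine Summable.tsum_le_tsum (fun n => ?_) (hasSum_zeta_nat hk).summable hasSum_zeta_two.summable
    rcases Nat.eq_zero_or_pos n with h | h
    · subst h
      simp [zero_pow, hk, Nat.mul_ne_zero two_ne_zero hk]
    · have hn : (1 : ℝ) ≤ (n : ℝ) := by exact_mod_cast h
      have : (n : ℝ) ^ 2 ≤ (n : ℝ) ^ (2 * k) := by
        apply pow_le_pow_right₀ hn
        omega
      exact one_div_le_one_div_of_le (by positivity) this
  have hpi : π ^ 2 / 6 ≤ 2 := by nlinarith [pi_lt_d2, pi_pos]
  linarith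

lemma bern_abs_le (n : ℕ) : |(bernoulli n : ℝ)| / (n.factorial : ℝ) ≤ 4 / (2 * π) ^ n := by
  have hpi := pi_pos
  match n with
  | 0 => norm_num
  | 1 =>
      rw [bernoulli_one]
      push_cast
      rw [abs_div, abs_neg, abs_one, abs_two]
      rw [div_le_div_iff₀ (by norm_num) (by positivity)]
      simp [Nat.factorial]
      nlinarith [pi_lt_d2, pi_gt_three]
  | (m + 2) =>
      rcases Nat.even_or_odd (m + 2) with he | ho
      · obtain ⟨k, hk⟩ := he
        have hk0 : k ≠ 0 := by omega
        have hmk : m + 2 = 2 * k := by omega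
        rw [hmk]
        have hz := (hasSum_zeta_nat hk0).tsum_eq
        have hnn : (0:ℝ) ≤ ∑' n : ℕ, 1 / (n : ℝ) ^ (2 * k) :=
          tsum_nonneg fun n => by positivity
        have hle2 := zeta_le_two hk0
        set Z := ∑' n : ℕ, 1 / (n : ℝ) ^ (2 * k) with hZ
        have habs : Z = 2 ^ (2 * k - 1) * π ^ (2 * k) * |(bernoulli (2*k) : ℝ)| / ((2*k).factorial : ℝ) := by
          calc Z = |Z| := (abs_of_nonneg hnn).symm
          _ = |((-1:ℝ)) ^ (k + 1) * 2 ^ (2 * k - 1) * π ^ (2 * k) * (bernoulli (2*k) : ℝ) / ((2*k).factorial : ℝ)| := by rw [hz]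
          _ = 2 ^ (2 * k - 1) * π ^ (2 * k) * |(bernoulli (2*k) : ℝ)| / ((2*k).factorial : ℝ) := by
              rw [abs_div, abs_mul, abs_mul, abs_mul, abs_pow, abs_pow, abs_pow, abs_neg, abs_one,
                one_pow, one_mul, abs_of_pos hpi, Nat.abs_cast, abs_two]
        have hA : (0:ℝ) < 2 ^ (2 * k - 1) * π ^ (2 * k) := by positivity
        have h2pi : (2 * π) ^ (2 * k) = 2 * (2 ^ (2 * k - 1) * π ^ (2 * k)) := by
          rw [mul_pow, ← mul_assoc]
          congr 1
          rw [← pow_succ']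
          congr 1
          omega
        rw [div_le_div_iff₀ (by positivity) (by positivity), h2pi]
        have : 2 ^ (2 * k - 1) * π ^ (2 * k) * |(bernoulli (2*k) : ℝ)| / ((2*k).factorial : ℝ) ≤ 2 := by
          rw [← habs]; exact hle2
        rw [div_le_iff₀ (by positivity)] at this
        nlinarith [show (0:ℝ) < ((2*k).factorial : ℝ) from by positivity]
      · have hb : bernoulli (m + 2) = 0 := by
          rw [bernoulli_eq_bernoulli'_of_ne_one (by omega)]
          exact bernoulli'_eq_zero_of_odd ho (by omega)
        rw [hb]
        simp
        positivity


/-- the scalar Bernoulli series -/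
noncomputable def bs (u : ℝ) (n : ℕ) : ℝ := (bernoulli n : ℝ) / (n.factorial : ℝ) * u ^ n

lemma summable_norm_bs {u : ℝ} (hu : |u| < 2 * π) : Summable fun n => ‖bs u n‖ := by
  have hpi := pi_pos
  refine Summable.of_nonneg_of_le (fun n => norm_nonneg _) (fun n => ?_)
    ((summable_geometric_of_lt_one (by positivity) (by rw [div_lt_one (by positivity)]; exact hu)
      (r := |u| / (2 * π))).mul_left 4)
  have h1 : ‖bs u n‖ = |(bernoulli n : ℝ)| / (n.factorial : ℝ) * |u| ^ n := by
    rw [bs, Real.norm_eq_abs, abs_mul, abs_div, abs_pow, Nat.abs_cast]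
  rw [h1]
  calc |(bernoulli n : ℝ)| / (n.factorial : ℝ) * |u| ^ n
      ≤ 4 / (2 * π) ^ n * |u| ^ n :=
        mul_le_mul_of_nonneg_right (bern_abs_le n) (by positivity)
    _ = 4 * (|u| / (2 * π)) ^ n := by rw [div_pow]; ring

lemma summable_norm_exp (v : ℝ) : Summable fun n => ‖v ^ n / (n.factorial : ℝ)‖ := by
  refine (Real.summable_pow_div_factorial |v|).congr fun n => ?_
  rw [Real.norm_eq_abs, abs_div, abs_pow, Nat.abs_cast]

lemma exp_tsum (v : ℝ) : Real.exp v = ∑' n : ℕ, v ^ n / (n.factorial : ℝ) := by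
  rw [Real.exp_eq_exp_ℝ, NormedSpace.exp_eq_tsum_div]

/-- per-`n` Cauchy coefficient identity -/
lemma coeff_id {u : ℝ} (x : ℝ) (n : ℕ) :
    ∑ kl ∈ antidiagonal n, bs u kl.1 * ((x * u) ^ kl.2 / (kl.2.factorial : ℝ))
      = bernoulliPoly n x / (n.factorial : ℝ) * u ^ n := by
  rw [Finset.Nat.sum_antidiagonal_eq_sum_range_succ_mk, bernoulliPoly_eq, Finset.sum_div,
    Finset.sum_mul]
  refine Finset.sum_congr rfl fun i hi => ?_
  have hin : i ≤ n := Nat.lt_succ_iff.mp (Finset.mem_range.mp hi)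
  rw [bs, Nat.cast_choose ℝ hin, mul_pow]
  have hu : u ^ i * u ^ (n - i) = u ^ n := by
    rw [← pow_add]; congr 1; omega
  have hfi : ((i.factorial : ℝ)) ≠ 0 := Nat.cast_ne_zero.mpr (Nat.factorial_ne_zero _)
  have hfni : (((n-i).factorial : ℝ)) ≠ 0 := Nat.cast_ne_zero.mpr (Nat.factorial_ne_zero _)
  have hfn : ((n.factorial : ℝ)) ≠ 0 := Nat.cast_ne_zero.mpr (Nat.factorial_ne_zero _)
  field_simp
  ring_nf
  rw [← hu]
  ring

/-- The key generating-function identity. -/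
lemma tsum_bernoulliPoly {u : ℝ} (hu : u ≠ 0) (hu2 : |u| < 2 * π) (x : ℝ) :
    HasSum (fun n => bernoulliPoly n x / (n.factorial : ℝ) * u ^ n)
      (u * Real.exp (x * u) / (Real.exp u - 1)) := by
  have hbs := summable_norm_bs hu2
  have key : ∀ y : ℝ, (∑' n, bs u n) * Real.exp (y * u)
      = ∑' n, bernoulliPoly n y / (n.factorial : ℝ) * u ^ n := by
    intro y
    rw [exp_tsum (y * u),
      tsum_mul_tsum_eq_tsum_sum_antidiagonal_of_summable_norm hbs (summable_norm_exp (y * u))]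
    exact tsum_congr fun n => coeff_id y n
  have hGnorm : ∀ y : ℝ, Summable fun n => ‖bernoulliPoly n y / (n.factorial : ℝ) * u ^ n‖ := by
    intro y
    refine (summable_norm_sum_mul_antidiagonal_of_summable_norm hbs
      (summable_norm_exp (y * u))).congr fun n => ?_
    rw [coeff_id y n]
  -- value of the scalar series
  have hS : (∑' n, bs u n) = u / (Real.exp u - 1) := by
    have h1 := key 1
    rw [one_mul] at h1
    have heval : ∀ n : ℕ, bernoulliPoly n 1 / (n.factorial : ℝ) * u ^ n
        = bs u n + (if n = 1 then u else 0) := by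
      intro n
      have : bernoulliPoly n 1 = (bernoulli n : ℝ) + (if n = 1 then 1 else 0) := by
        unfold bernoulliPoly
        rw [Polynomial.eval_one_map, Polynomial.bernoulli_eval_one, eq_ratCast]
        by_cases h : n = 1
        · subst h; rw [bernoulli'_one]; norm_num
        · rw [bernoulli_eq_bernoulli'_of_ne_one h]; simp [h]
      rw [this]
      by_cases h : n = 1
      · subst h; rw [bs]; push_cast [Nat.factorial]; ring
      · rw [bs]; simp [h]
    rw [tsum_congr heval] at h1
    have hsum_bs : Summable (bs u) := hbs.of_norm
    have hite : Summable (fun n : ℕ => if n = 1 then u else 0) := (hasSum_ite_eq 1 u).summable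
    rw [Summable.tsum_add hsum_bs hite, (hasSum_ite_eq 1 u).tsum_eq] at h1
    have hexp : Real.exp u ≠ 1 := fun h =>
      hu (Real.exp_injective (by rw [Real.exp_zero]; exact h))
    have hne : Real.exp u - 1 ≠ 0 := sub_ne_zero.mpr hexp
    field_simp
    linear_combination h1
  rw [Summable.hasSum_iff ((hGnorm x).of_norm), ← key x, hS]
  ring

/-- For `0 < |u| < 2π` and every real `x`,
`u cosh((x-1/2)u) / (2 sinh(u/2)) = ∑_{k ≥ 0} (B_{2k}(x)/(2k)!) u^{2k}`. -/
theorem cosh_div_sinh_eq_tsum_bernoulli (u : ℝ) (hu : u ≠ 0) (hu2 : |u| < 2 * π) (x : ℝ) :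
    u * Real.cosh ((x - 1/2) * u) / (2 * Real.sinh (u / 2))
      = ∑' k : ℕ, bernoulliPoly (2 * k) x / (Nat.factorial (2 * k) : ℝ) * u ^ (2 * k) := by
  have hpi := pi_pos
  set G : ℕ → ℝ := fun n => bernoulliPoly n x / (n.factorial : ℝ) * u ^ n with hG
  have h1 := tsum_bernoulliPoly hu hu2 x
  have h2 := tsum_bernoulliPoly (neg_ne_zero.mpr hu) (by rwa [abs_neg]) x
  have hfun : (fun n => bernoulliPoly n x / (n.factorial : ℝ) * (-u) ^ n)
      = fun n => (-1 : ℝ) ^ n * G n := by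
    funext n; rw [hG, neg_pow]; ring
  rw [hfun] at h2
  have h3 := (h1.add h2).div_const 2
  have hfe : (fun n => (G n + (-1 : ℝ) ^ n * G n) / 2)
      = fun n => if Even n then G n else 0 := by
    funext n
    rcases Nat.even_or_odd n with hn | hn
    · rw [if_pos hn, hn.neg_one_pow]; ring
    · rw [if_neg (Nat.not_even_iff_odd.mpr hn), hn.neg_one_pow]; ring
  rw [hfe] at h3
  have hinj : Function.Injective (fun k : ℕ => 2 * k) := fun a b h => by simp only at h; omega
  have h0 : ∀ n ∉ Set.range (fun k : ℕ => 2 * k), (if Even n then G n else 0) = 0 := by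
    intro n hn
    rw [if_neg]
    intro he
    obtain ⟨c, hc⟩ := he
    exact hn ⟨c, show 2 * c = n by omega⟩
  have h4 := (Function.Injective.hasSum_iff hinj h0).2 h3
  have hcomp : ((fun n => if Even n then G n else 0) ∘ fun k : ℕ => 2 * k)
      = fun k : ℕ => bernoulliPoly (2 * k) x / (Nat.factorial (2 * k) : ℝ) * u ^ (2 * k) := by
    funext k
    simp only [Function.comp_apply, if_pos (even_two_mul k), hG]
  rw [hcomp] at h4
  rw [h4.tsum_eq]
  -- now pure algebra with exponentials
  rw [Real.cosh_eq, Real.sinh_eq]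
  have ht : Real.exp u = Real.exp (u/2) * Real.exp (u/2) := by
    rw [← Real.exp_add]; norm_num
  have hxu : Real.exp (x * -u) = (Real.exp (x * u))⁻¹ := by
    rw [← Real.exp_neg]; ring_nf
  have hnegu : Real.exp (-u) = (Real.exp u)⁻¹ := Real.exp_neg u
  have hc1 : Real.exp ((x - 1/2) * u) = Real.exp (x * u) / Real.exp (u/2) := by
    rw [← Real.exp_sub]; ring_nf
  have hc2 : Real.exp (-((x - 1/2) * u)) = Real.exp (u/2) / Real.exp (x * u) := by
    rw [← Real.exp_sub]; ring_nf
  have hnu2 : Real.exp (-(u/2)) = (Real.exp (u/2))⁻¹ := Real.exp_neg _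
  rw [ht, hxu, hnegu, hc1, hc2, hnu2, ht]
  set t := Real.exp (u/2) with htdef
  set s := Real.exp (x * u) with hsdef
  have ht0 : 0 < t := Real.exp_pos _
  have hs0 : 0 < s := Real.exp_pos _
  have ht1 : t ≠ 1 := fun h =>
    hu (by have := Real.exp_injective (h.trans Real.exp_zero.symm); linarith)
  have htt : t * t - 1 ≠ 0 := by
    intro h
    apply ht1
    nlinarith
  have htinv : t - t⁻¹ ≠ 0 := by
    intro h
    apply htt
    have : t = t⁻¹ := by linarith
    field_simp at this
    nlinarith
  have httinv : (t * t)⁻¹ - 1 ≠ 0 := by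
    intro h
    apply htt
    have h2 : (t * t)⁻¹ = 1 := by linarith
    have := inv_eq_one.mp h2
    linarith
  have hst : s - s * t ^ 2 ≠ 0 := by
    intro h
    apply htt
    have : s * (1 - t * t) = 0 := by ring_nf; linear_combination h
    rcases mul_eq_zero.mp this with h' | h'
    · exact absurd h' (ne_of_gt hs0)
    · linarith
  rw [show ((t * t)⁻¹ - 1) = (1 - t * t) / (t * t) by field_simp]
  have h1tt : 1 - t * t ≠ 0 := fun h => htt (by linarith)
  field_simp
  ring_nf
  rw [show (1:ℝ) - t ^ 2 = -(-1 + t ^ 2) by ring, inv_neg]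
  ring
end

section
/- For every integer L ≥ 0 and every real u > 0: S_L(0,u) = 0, S_L(1/2,u) = 0, and S_L(x,u) > 0 for every x in the open interval (0,1/2). -/
open Real

/-- For an integer `L ≥ -1`, `S_L(x,u) = (-1)^L (sinh((x-1/2)u)/(2 sinh(u/2))
    - ∑_{k=0}^{L} (B_{2k+1}(x)/(2k+1)!) u^{2k})`, the empty sum (for `L = -1`) being zero. -/
noncomputable def S (L : ℤ) (x u : ℝ) : ℝ :=
  (-1 : ℝ) ^ L * (Real.sinh ((x - 1/2) * u) / (2 * Real.sinh (u / 2))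
    - ∑ k ∈ Finset.range (L + 1).toNat,
        bernoulliPoly (2 * k + 1) x / (Nat.factorial (2 * k + 1) : ℝ) * u ^ (2 * k))

/-! ### Auxiliary lemmas on Bernoulli polynomials -/

lemma bernoulliPoly_eval_zero (n : ℕ) : bernoulliPoly n 0 = (bernoulli n : ℝ) := by
  have h : (0:ℝ) = algebraMap ℚ ℝ 0 := by norm_num
  rw [bernoulliPoly, h, Polynomial.eval_map, Polynomial.eval₂_at_apply,
    Polynomial.bernoulli_eval_zero]
  rfl

lemma bernoulliPoly_eval_one (n : ℕ) : bernoulliPoly n 1 = (bernoulli' n : ℝ) := by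
  have h : (1:ℝ) = algebraMap ℚ ℝ 1 := by norm_num
  rw [bernoulliPoly, h, Polynomial.eval_map, Polynomial.eval₂_at_apply,
    Polynomial.bernoulli_eval_one]
  rfl

lemma hasDerivAt_bernoulliPoly (n : ℕ) (x : ℝ) :
    HasDerivAt (fun y => bernoulliPoly n y) ((n : ℝ) * bernoulliPoly (n-1) x) x := by
  have h := ((Polynomial.bernoulli n).map (algebraMap ℚ ℝ)).hasDerivAt x
  rw [Polynomial.derivative_map, Polynomial.derivative_bernoulli] at h
  simpa [bernoulliPoly, Polynomial.map_mul] using h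

lemma bernoulliPoly_one_sub (n : ℕ) : ∀ x : ℝ,
    bernoulliPoly n (1 - x) = (-1 : ℝ) ^ n * bernoulliPoly n x := by
  induction n with
  | zero => intro x; simp [bernoulliPoly, Polynomial.bernoulli_zero]
  | succ n ih =>
    intro x
    set f : ℝ → ℝ := fun y =>
      bernoulliPoly (n+1) (1 - y) - (-1 : ℝ) ^ (n+1) * bernoulliPoly (n+1) y with hf
    have hd : ∀ y : ℝ, HasDerivAt f 0 y := by
      intro y
      have h1 : HasDerivAt (fun y : ℝ => bernoulliPoly (n+1) (1 - y))
          (((n:ℝ)+1) * bernoulliPoly n (1-y) * (-1)) y := by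
        have := (hasDerivAt_bernoulliPoly (n+1) (1-y)).comp y
          ((hasDerivAt_id y).const_sub 1)
        simpa [Function.comp_def] using this
      have h2 := (hasDerivAt_bernoulliPoly (n+1) y).const_mul ((-1:ℝ)^(n+1))
      have h3 := h1.sub h2
      have h0 : ((n:ℝ)+1) * bernoulliPoly n (1-y) * (-1)
          - (-1:ℝ)^(n+1) * (((n:ℝ)+1) * bernoulliPoly ((n+1)-1) y) = 0 := by
        simp only [Nat.add_sub_cancel]
        rw [ih y, pow_succ]; ring
      have h3' : HasDerivAt f (((n:ℝ)+1) * bernoulliPoly n (1-y) * (-1)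
          - (-1:ℝ)^(n+1) * (((n:ℝ)+1) * bernoulliPoly ((n+1)-1) y)) y := by
        convert h3 using 2; rfl; rfl; rfl; push_cast; ring
      rwa [h0] at h3'
    have hconst : f x = f 0 :=
      is_const_of_deriv_eq_zero (fun y => (hd y).differentiableAt)
        (fun y => (hd y).deriv) x 0
    have hf0 : f 0 = 0 := by
      simp only [hf, sub_zero, bernoulliPoly_eval_one, bernoulliPoly_eval_zero]
      rw [bernoulli'_eq_bernoulli]
      push_cast
      ring
    have := hconst.trans hf0
    have := sub_eq_zero.mp this
    simpa [hf] using this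

lemma bernoulliPoly_half (k : ℕ) : bernoulliPoly (2*k+1) (1/2 : ℝ) = 0 := by
  have h := bernoulliPoly_one_sub (2*k+1) (1/2)
  rw [show (1:ℝ) - 1/2 = 1/2 by norm_num, pow_succ, pow_mul] at h
  simp at h
  linarith

lemma bernoulliPoly_odd_zero (k : ℕ) (hk : 1 ≤ k) : bernoulliPoly (2*k+1) 0 = 0 := by
  rw [bernoulliPoly_eval_zero, bernoulli]
  rw [bernoulli'_eq_zero_of_odd ⟨k, by ring⟩ (by omega)]
  simp

/-! ### The functions `gfun` and `gdfun` -/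

noncomputable def gfun (n : ℕ) (u x : ℝ) : ℝ :=
  Real.sinh ((x - 1/2) * u) / (2 * Real.sinh (u / 2))
    - ∑ k ∈ Finset.range n,
        bernoulliPoly (2 * k + 1) x / (Nat.factorial (2 * k + 1) : ℝ) * u ^ (2 * k)

noncomputable def gdfun (n : ℕ) (u x : ℝ) : ℝ :=
  u * Real.cosh ((x - 1/2) * u) / (2 * Real.sinh (u / 2))
    - ∑ k ∈ Finset.range n,
        bernoulliPoly (2 * k) x / (Nat.factorial (2 * k) : ℝ) * u ^ (2 * k)

lemma hasDerivAt_gfun (n : ℕ) (u x : ℝ) :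
    HasDerivAt (gfun n u) (gdfun n u x) x := by
  have h1 : HasDerivAt (fun x : ℝ => Real.sinh ((x - 1/2) * u) / (2 * Real.sinh (u/2)))
      (u * Real.cosh ((x - 1/2) * u) / (2 * Real.sinh (u/2))) x := by
    have := (((hasDerivAt_id x).sub_const (1/2)).mul_const u).sinh.div_const
      (2 * Real.sinh (u/2))
    convert this using 1
    rfl
    rfl
    rfl
    simp only [id_eq]
    ring
  have h2 : ∀ k ∈ Finset.range n, HasDerivAt
      (fun x : ℝ => bernoulliPoly (2*k+1) x / (Nat.factorial (2*k+1) : ℝ) * u ^ (2*k))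
      (bernoulliPoly (2*k) x / (Nat.factorial (2*k) : ℝ) * u ^ (2*k)) x := by
    intro k _
    have := ((hasDerivAt_bernoulliPoly (2*k+1) x).div_const
      (Nat.factorial (2*k+1) : ℝ)).mul_const (u ^ (2*k))
    convert this using 1
    rfl
    rfl
    simp only [Nat.add_sub_cancel]
    rw [Nat.factorial_succ]
    have h2k : ((2*k).factorial : ℝ) ≠ 0 := Nat.cast_ne_zero.mpr (Nat.factorial_ne_zero _)
    field_simp
    push_cast
    ring
  exact h1.sub (HasDerivAt.fun_sum h2)

lemma hasDerivAt_gdfun (n : ℕ) (u x : ℝ) :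
    HasDerivAt (gdfun (n+1) u) (u^2 * gfun n u x) x := by
  have h1 : HasDerivAt (fun x : ℝ => u * Real.cosh ((x - 1/2) * u) / (2 * Real.sinh (u/2)))
      (u^2 * (Real.sinh ((x - 1/2) * u) / (2 * Real.sinh (u/2)))) x := by
    have := ((((hasDerivAt_id x).sub_const (1/2)).mul_const u).cosh.const_mul u).div_const
      (2 * Real.sinh (u/2))
    convert this using 1
    rfl
    rfl
    rfl
    simp only [id_eq]
    ring
  have h2 : ∀ k ∈ Finset.range (n+1), HasDerivAt
      (fun x : ℝ => bernoulliPoly (2*k) x / (Nat.factorial (2*k) : ℝ) * u ^ (2*k))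
      (((2*k : ℕ) : ℝ) * bernoulliPoly (2*k-1) x / (Nat.factorial (2*k) : ℝ) * u ^ (2*k)) x := by
    intro k _
    exact ((hasDerivAt_bernoulliPoly (2*k) x).div_const _).mul_const _
  have h3 := h1.sub (HasDerivAt.fun_sum h2)
  have hsum : ∑ k ∈ Finset.range (n+1),
      ((2*k : ℕ) : ℝ) * bernoulliPoly (2*k-1) x / (Nat.factorial (2*k) : ℝ) * u ^ (2*k)
      = u^2 * ∑ k ∈ Finset.range n,
          bernoulliPoly (2*k+1) x / (Nat.factorial (2*k+1) : ℝ) * u ^ (2*k) := by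
    rw [Finset.sum_range_succ', Finset.mul_sum]
    have h0 : ((2*0 : ℕ) : ℝ) * bernoulliPoly (2*0-1) x / (Nat.factorial (2*0) : ℝ)
        * u ^ (2*0) = 0 := by norm_num
    rw [h0, add_zero]
    refine Finset.sum_congr rfl fun i _ => ?_
    have e1 : 2*(i+1) - 1 = 2*i+1 := by omega
    rw [e1]
    have hne : ((2*i+1).factorial : ℝ) ≠ 0 := Nat.cast_ne_zero.mpr (Nat.factorial_ne_zero _)
    have hfac : (((2*(i+1)).factorial) : ℝ) = (2*(i+1) : ℕ) * ((2*i+1).factorial : ℝ) := by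
      rw [show 2*(i+1) = (2*i+1) + 1 by ring, Nat.factorial_succ]; push_cast; ring
    rw [hfac]
    have hne2 : ((2*(i+1):ℕ) : ℝ) ≠ 0 := by positivity
    rw [show 2*(i+1) = 2*i+2 by ring]
    field_simp
    ring
  rw [gfun, mul_sub, ← hsum]
  exact h3

lemma gfun_half (n : ℕ) (u : ℝ) : gfun n u (1/2) = 0 := by
  rw [gfun]
  have : ∀ k ∈ Finset.range n,
      bernoulliPoly (2*k+1) (1/2 : ℝ) / (Nat.factorial (2*k+1) : ℝ) * u ^ (2*k) = 0 := by
    intro k _; rw [bernoulliPoly_half]; ring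
  rw [Finset.sum_eq_zero this]
  norm_num

lemma gfun_zero (n : ℕ) (hn : 1 ≤ n) (u : ℝ) (hu : 0 < u) : gfun n u 0 = 0 := by
  rw [gfun]
  have hs : Real.sinh ((0 - 1/2) * u) / (2 * Real.sinh (u/2)) = -(1/2) := by
    rw [show ((0:ℝ) - 1/2) * u = -(u/2) by ring, Real.sinh_neg]
    have : Real.sinh (u/2) ≠ 0 := ne_of_gt (by positivity)
    field_simp
  have hsum : ∑ k ∈ Finset.range n,
      bernoulliPoly (2*k+1) 0 / (Nat.factorial (2*k+1) : ℝ) * u ^ (2*k) = -(1/2) := by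
    rw [Finset.sum_eq_single 0]
    · rw [bernoulliPoly_eval_zero]
      norm_num [bernoulli_one]
    · intro k _ hk
      rw [bernoulliPoly_odd_zero k (by omega)]; ring
    · intro h; exact absurd (Finset.mem_range.mpr hn) h
  rw [hs, hsum]; ring

/-- The key induction: `(-1)^(n+1) gfun n u x > 0` on `(0, 1/2)`. -/
lemma key_pos (n : ℕ) (u : ℝ) (hu : 0 < u) :
    ∀ x ∈ Set.Ioo (0:ℝ) (1/2), 0 < (-1:ℝ)^(n+1) * gfun n u x := by
  induction n with
  | zero =>
    intro x hx
    rw [gfun]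
    simp only [Finset.range_zero, Finset.sum_empty, sub_zero, pow_one]
    have h1 : Real.sinh ((x - 1/2) * u) < 0 := by
      apply Real.sinh_neg_iff.mpr
      obtain ⟨h1, h2⟩ := hx
      have : x - 1/2 < 0 := by linarith
      exact mul_neg_of_neg_of_pos this hu
    have h2 : (0:ℝ) < 2 * Real.sinh (u/2) := by positivity
    have := div_neg_of_neg_of_pos h1 h2
    linarith
  | succ n ih =>
    intro x hx
    set f : ℝ → ℝ := fun y => (-1:ℝ)^(n+2) * gfun (n+1) u y with hfdef
    have hderiv1 : ∀ y, HasDerivAt f ((-1:ℝ)^(n+2) * gdfun (n+1) u y) y :=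
      fun y => (hasDerivAt_gfun (n+1) u y).const_mul _
    have hderivf : deriv f = fun y => (-1:ℝ)^(n+2) * gdfun (n+1) u y :=
      funext fun y => (hderiv1 y).deriv
    have hderiv2 : ∀ y, deriv (deriv f) y = (-1:ℝ)^(n+2) * (u^2 * gfun n u y) := by
      intro y
      rw [hderivf]
      exact (((hasDerivAt_gdfun n u y)).const_mul _).deriv
    have hcont : ContinuousOn f (Set.Icc 0 (1/2)) :=
      fun y _ => ((hderiv1 y).differentiableAt.continuousAt).continuousWithinAt
    have hconc : StrictConcaveOn ℝ (Set.Icc (0:ℝ) (1/2)) f := by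
      apply strictConcaveOn_of_deriv2_neg (convex_Icc 0 (1/2)) hcont
      intro y hy
      rw [interior_Icc] at hy
      have h2 : deriv^[2] f y = deriv (deriv f) y := by
        rw [Function.iterate_succ_apply', Function.iterate_one]
      rw [h2, hderiv2]
      have hpos := ih y hy
      have heq : (-1:ℝ)^(n+2) * (u^2 * gfun n u y) = -(u^2 * ((-1:ℝ)^(n+1) * gfun n u y)) := by
        rw [pow_succ]; ring
      rw [heq]
      have : 0 < u^2 * ((-1:ℝ)^(n+1) * gfun n u y) := by positivity
      linarith
    have hf0 : f 0 = 0 := by rw [hfdef]; simp [gfun_zero (n+1) (by omega) u hu]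
    have hfh : f (1/2) = 0 := by
      show (-1:ℝ)^(n+2) * gfun (n+1) u (1/2) = 0
      rw [gfun_half]; ring
    obtain ⟨hx0, hxh⟩ := hx
    have ha : (0:ℝ) < 1 - 2*x := by linarith
    have hb : (0:ℝ) < 2*x := by linarith
    have hcomb := hconc.2 (Set.left_mem_Icc.mpr (by norm_num))
      (Set.right_mem_Icc.mpr (by norm_num)) (by norm_num) ha hb (by ring)
    rw [hf0, hfh] at hcomb
    simp only [smul_eq_mul, smul_zero, mul_zero, add_zero] at hcomb
    rw [show (0:ℝ) + 2*x*(1/2) = x by ring] at hcomb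
    exact hcomb

/-- For every integer `L ≥ 0` and every `u > 0`: `S_L(0,u) = 0`,
`S_L(1/2,u) = 0`, and `S_L(x,u) > 0` for every `x ∈ (0,1/2)`. -/
theorem S_nonneg_props (L : ℤ) (hL : 0 ≤ L) (u : ℝ) (hu : 0 < u) :
    S L 0 u = 0 ∧ S L (1/2) u = 0 ∧
      ∀ x ∈ Set.Ioo (0 : ℝ) (1/2), 0 < S L x u := by
  obtain ⟨n, rfl⟩ : ∃ n : ℕ, L = (n : ℤ) := ⟨L.toNat, (Int.toNat_of_nonneg hL).symm⟩
  have htn : ((n : ℤ) + 1).toNat = n + 1 := by omega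
  have hS : ∀ x : ℝ, S (n : ℤ) x u = (-1:ℝ)^n * gfun (n+1) u x := by
    intro x
    rw [S, htn, zpow_natCast]
    rfl
  have hsign : ∀ x : ℝ, (-1:ℝ)^n * gfun (n+1) u x = (-1:ℝ)^(n+1+1) * gfun (n+1) u x := by
    intro x
    rw [show n+1+1 = n+2 by ring, pow_add]
    ring
  refine ⟨?_, ?_, ?_⟩
  · rw [hS, gfun_zero (n+1) (by omega) u hu, mul_zero]
  · rw [hS, gfun_half, mul_zero]
  · intro x hx
    rw [hS, hsign]
    exact key_pos (n+1) u hu x hx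
end

section
/- For every real z > 0, the negative logarithmic derivative of the gamma function satisfies −(d/dz) log Γ(z) = ∫_0^∞ ( e^{−uz}/(1 − e^{−u}) − e^{−u}/u ) du. -/
open Real MeasureTheory

namespace GaussDigamma

open Real MeasureTheory Set Filter Topology


noncomputable def g (u : ℝ) : ℝ := (1 - Real.exp (-u))⁻¹ - u⁻¹

noncomputable def f (z u : ℝ) : ℝ :=
  Real.exp (-u * z) / (1 - Real.exp (-u)) - Real.exp (-u) / u

noncomputable def I (z : ℝ) : ℝ := ∫ u in Ioi (0:ℝ), f z u

lemma one_sub_exp_pos {u : ℝ} (hu : 0 < u) : 0 < 1 - Real.exp (-u) := by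
  have h : Real.exp (-u) < Real.exp 0 := Real.exp_lt_exp.mpr (by linarith)
  rw [Real.exp_zero] at h; linarith

lemma g_nonneg {u : ℝ} (hu : 0 < u) : 0 ≤ g u := by
  have h1 := one_sub_exp_pos hu
  have h2 : 1 - Real.exp (-u) ≤ u := by
    have := Real.add_one_le_exp (-u); linarith
  rw [g, sub_nonneg]
  exact inv_anti₀ h1 h2

lemma g_le_one {u : ℝ} (hu : 0 < u) : g u ≤ 1 := by
  have hE := Real.exp_pos u
  have hE1 : u + 1 ≤ Real.exp u := by linarith [Real.add_one_le_exp u]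
  have h5 : (Real.exp u)⁻¹ ≤ (u + 1)⁻¹ := inv_anti₀ (by linarith) hE1
  have h6 : (u + 1)⁻¹ < 1 := inv_lt_one_of_one_lt₀ (by linarith)
  have h6' : (0:ℝ) < 1 - (u + 1)⁻¹ := by linarith
  have h7 : (1 - (Real.exp u)⁻¹)⁻¹ ≤ (1 - (u + 1)⁻¹)⁻¹ :=
    inv_anti₀ h6' (by linarith)
  have h8 : (1 - (u + 1)⁻¹)⁻¹ = 1 + u⁻¹ := by
    rw [eq_comm]
    field_simp
    rw [add_sub_cancel_right, div_self hu.ne']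
  have hu' : (0:ℝ) ≤ u⁻¹ := by positivity
  rw [g, Real.exp_neg]
  linarith

/-- for `a ≤ b`, `exp (-a) - exp (-b) ≤ (b - a) * exp (-a)` -/
lemma exp_neg_sub_le {a b : ℝ} (hab : a ≤ b) :
    Real.exp (-a) - Real.exp (-b) ≤ (b - a) * Real.exp (-a) := by
  have h1 : Real.exp (-b) = Real.exp (-a) * Real.exp (a - b) := by
    rw [← Real.exp_add]; ring_nf
  have h2 : 1 + (a - b) ≤ Real.exp (a - b) := by linarith [Real.add_one_le_exp (a - b)]
  nlinarith [Real.exp_pos (-a)]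

lemma exp_neg_mono {a b : ℝ} (hab : a ≤ b) : Real.exp (-b) ≤ Real.exp (-a) :=
  Real.exp_le_exp.mpr (by linarith)

lemma frullani_integrand_bound {z u : ℝ} (hz : 0 < z) (hu : 0 < u) :
    |(Real.exp (-u * z) - Real.exp (-u)) / u| ≤ |z - 1| * Real.exp (-(min z 1) * u) := by
  rw [abs_div, abs_of_pos hu, div_le_iff₀ hu]
  rcases le_total z 1 with h | h
  · have hmin : min z 1 = z := min_eq_left h
    have hab : u * z ≤ u := by nlinarith
    have h1 : Real.exp (-(u*z)) - Real.exp (-u) ≤ (u - u*z) * Real.exp (-(u*z)) :=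
      exp_neg_sub_le hab
    have h2 : Real.exp (-u) ≤ Real.exp (-(u*z)) := exp_neg_mono hab
    have habs : |Real.exp (-u * z) - Real.exp (-u)| = Real.exp (-(u*z)) - Real.exp (-u) := by
      rw [abs_of_nonneg]; · ring_nf
      · rw [show -u * z = -(u*z) by ring]; linarith
    rw [habs, hmin, show -z * u = -(u*z) by ring, abs_of_nonpos (by linarith)]
    nlinarith [Real.exp_pos (-(u*z))]
  · have hmin : min z 1 = 1 := min_eq_right h
    have hab : u ≤ u * z := by nlinarith
    have h1 : Real.exp (-u) - Real.exp (-(u*z)) ≤ (u*z - u) * Real.exp (-u) :=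
      exp_neg_sub_le hab
    have h2 : Real.exp (-(u*z)) ≤ Real.exp (-u) := exp_neg_mono hab
    have habs : |Real.exp (-u * z) - Real.exp (-u)| = Real.exp (-u) - Real.exp (-(u*z)) := by
      rw [abs_of_nonpos]; · ring_nf
      · rw [show -u * z = -(u*z) by ring]; linarith
    rw [habs, hmin, abs_of_nonneg (by linarith), show -(1:ℝ) * u = -u by ring]
    nlinarith [Real.exp_pos (-u)]

lemma integrable_exp_neg_mul {z : ℝ} (hz : 0 < z) :
    IntegrableOn (fun u : ℝ => Real.exp (-u * z)) (Ioi 0) := by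
  have := exp_neg_integrableOn_Ioi 0 hz
  simpa [mul_comm] using this

lemma integrable_exp_mul_g {z : ℝ} (hz : 0 < z) :
    IntegrableOn (fun u : ℝ => Real.exp (-u * z) * g u) (Ioi 0) := by
  refine (integrable_exp_neg_mul hz).mono' ?_ ?_
  · refine Measurable.aestronglyMeasurable ?_
    unfold g
    fun_prop
  · filter_upwards [ae_restrict_mem measurableSet_Ioi] with u hu
    have h0 := g_nonneg hu
    have h1 := g_le_one hu
    rw [Real.norm_eq_abs, abs_of_nonneg (by positivity)]
    nlinarith [Real.exp_pos (-u * z)]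

lemma integrable_frullani_integrand {z : ℝ} (hz : 0 < z) :
    IntegrableOn (fun u : ℝ => (Real.exp (-u * z) - Real.exp (-u)) / u) (Ioi 0) := by
  have hm : 0 < min z 1 := lt_min hz one_pos
  refine ((exp_neg_integrableOn_Ioi 0 hm).const_mul |z - 1|).mono' ?_ ?_
  · refine Measurable.aestronglyMeasurable (by fun_prop)
  · filter_upwards [ae_restrict_mem measurableSet_Ioi] with u hu
    rw [Real.norm_eq_abs]
    exact frullani_integrand_bound hz hu

lemma f_decomp {z u : ℝ} (hu : 0 < u) :
    f z u = Real.exp (-u * z) * g u + (Real.exp (-u * z) - Real.exp (-u)) / u := by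
  rw [f, g]; ring

lemma integrable_f {z : ℝ} (hz : 0 < z) : IntegrableOn (f z) (Ioi 0) := by
  have h : IntegrableOn (fun u : ℝ => Real.exp (-u * z) * g u
      + (Real.exp (-u * z) - Real.exp (-u)) / u) (Ioi 0) :=
    (integrable_exp_mul_g hz).add (integrable_frullani_integrand hz)
  exact h.congr_fun (fun u hu => (f_decomp hu).symm) measurableSet_Ioi

lemma integral_exp_neg_mul {z : ℝ} (hz : 0 < z) :
    ∫ u in Ioi (0:ℝ), Real.exp (-u * z) = 1 / z := by
  have hd : ∀ x ∈ Ioi (0:ℝ), HasDerivAt (fun u => -Real.exp (-u * z) / z)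
      (Real.exp (-x * z)) x := by
    intro x _
    have h1 : HasDerivAt (fun u : ℝ => -u * z) (-z) x := by
      simpa using (hasDerivAt_id x).neg.mul_const z
    have h2 := (h1.exp).neg.div_const z
    exact h2.congr_deriv (by rw [div_eq_iff hz.ne']; ring)
  have htend : Tendsto (fun u => -Real.exp (-u * z) / z) atTop (𝓝 0) := by
    have h1 : Tendsto (fun u : ℝ => u * z) atTop atTop :=
      Tendsto.atTop_mul_const hz tendsto_id
    have h2 : Tendsto (fun u : ℝ => Real.exp (-(u * z))) atTop (𝓝 0) :=
      Real.tendsto_exp_neg_atTop_nhds_zero.comp h1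
    have h3 : Tendsto (fun u : ℝ => -Real.exp (-(u * z)) / z) atTop (𝓝 (-0 / z)) :=
      (h2.neg).div_const z
    simpa [neg_mul] using h3
  have := integral_Ioi_of_hasDerivAt_of_tendsto
    (by fun_prop : Continuous fun u => -Real.exp (-u * z) / z).continuousWithinAt
    hd (integrable_exp_neg_mul hz) htend
  rw [this]
  simp
  ring

lemma inner_interval {z u : ℝ} (hz : 1 ≤ z) (hu : 0 < u) :
    ∫ t in Ioc (1:ℝ) z, Real.exp (-u * t) = (Real.exp (-u) - Real.exp (-u * z)) / u := by
  rw [← intervalIntegral.integral_of_le hz]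
  have hd : ∀ t ∈ Set.uIcc (1:ℝ) z, HasDerivAt (fun t => -Real.exp (-u * t) / u)
      (Real.exp (-u * t)) t := by
    intro t _
    have h1 : HasDerivAt (fun t : ℝ => -u * t) (-u) t := by
      simpa using (hasDerivAt_id t).const_mul (-u)
    have h2 := (h1.exp).neg.div_const u
    exact h2.congr_deriv (by rw [div_eq_iff hu.ne']; ring)
  rw [intervalIntegral.integral_eq_sub_of_hasDerivAt hd ((by fun_prop : Continuous
    fun t : ℝ => Real.exp (-u * t)).intervalIntegrable 1 z)]
  rw [mul_one]
  ring

lemma frullani {z : ℝ} (hz : 1 < z) :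
    ∫ u in Ioi (0:ℝ), (Real.exp (-u) - Real.exp (-u * z)) / u = Real.log z := by
  have hkey : ∀ u ∈ Ioi (0:ℝ), (Real.exp (-u) - Real.exp (-u * z)) / u
      = ∫ t in Ioc (1:ℝ) z, Real.exp (-u * t) :=
    fun u hu => (inner_interval hz.le hu).symm
  rw [setIntegral_congr_fun measurableSet_Ioi hkey]
  have hprod : (volume.restrict (Ioi (0:ℝ))).prod (volume.restrict (Ioc (1:ℝ) z))
      = (volume.prod volume).restrict ((Ioi (0:ℝ)) ×ˢ (Ioc (1:ℝ) z)) :=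
    Measure.prod_restrict _ _
  have hb : Integrable (fun p : ℝ × ℝ => Real.exp (-1 * p.1) * 1)
      ((volume.restrict (Ioi (0:ℝ))).prod (volume.restrict (Ioc (1:ℝ) z))) :=
    Integrable.mul_prod (exp_neg_integrableOn_Ioi 0 one_pos)
      (integrableOn_const measure_Ioc_lt_top.ne)
  have hint : Integrable (Function.uncurry fun u t => Real.exp (-u * t))
      ((volume.restrict (Ioi (0:ℝ))).prod (volume.restrict (Ioc (1:ℝ) z))) := by
    refine hb.mono' ?_ ?_
    · exact (Real.continuous_exp.comp (continuous_fst.neg.mul continuous_snd)).aestronglyMeasurable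
    · rw [hprod]
      filter_upwards [ae_restrict_mem (measurableSet_Ioi.prod measurableSet_Ioc)] with p hp
      obtain ⟨hp1, hp2⟩ := hp
      have h1 : (0:ℝ) < p.1 := hp1
      have h2 : (1:ℝ) ≤ p.2 := hp2.1.le
      rw [Function.uncurry, Real.norm_eq_abs, abs_of_pos (Real.exp_pos _), mul_one]
      refine Real.exp_le_exp.mpr ?_
      nlinarith
  rw [integral_integral_swap hint]
  have h3 : ∀ t ∈ Ioc (1:ℝ) z, (∫ u in Ioi (0:ℝ), Real.exp (-u * t)) = 1 / t :=
    fun t ht => integral_exp_neg_mul (by linarith [ht.1])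
  rw [setIntegral_congr_fun measurableSet_Ioc h3, ← intervalIntegral.integral_of_le hz.le,
    integral_one_div (by
      rw [Set.uIcc_of_le hz.le]
      rintro ⟨h1, -⟩
      linarith), div_one]

lemma I_rec {z : ℝ} (hz : 0 < z) : I z - I (z + 1) = 1 / z := by
  rw [I, I, ← integral_sub (integrable_f hz) (integrable_f (by linarith)),
    ← integral_exp_neg_mul hz]
  refine setIntegral_congr_fun measurableSet_Ioi fun u hu => ?_
  have hu : (0:ℝ) < u := hu
  have h := (one_sub_exp_pos hu).ne'
  have hexp : Real.exp (-u * (z + 1)) = Real.exp (-u * z) * Real.exp (-u) := by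
    rw [← Real.exp_add]; ring_nf
  simp only [f, hexp]
  field_simp
  ring

lemma I_plus_log {z : ℝ} (hz : 1 < z) :
    I z + Real.log z = ∫ u in Ioi (0:ℝ), Real.exp (-u * z) * g u := by
  have hz' : 0 < z := by linarith
  have h1 : I z = (∫ u in Ioi (0:ℝ), Real.exp (-u * z) * g u)
      + ∫ u in Ioi (0:ℝ), (Real.exp (-u * z) - Real.exp (-u)) / u := by
    rw [I, ← integral_add (integrable_exp_mul_g hz') (integrable_frullani_integrand hz')]
    exact setIntegral_congr_fun measurableSet_Ioi fun u hu => f_decomp hu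
  have h2 : ∫ u in Ioi (0:ℝ), (Real.exp (-u * z) - Real.exp (-u)) / u = -Real.log z := by
    rw [← frullani hz, ← integral_neg]
    exact setIntegral_congr_fun measurableSet_Ioi fun u _ => by ring
  rw [h1, h2]
  ring

lemma I_log_bound {z : ℝ} (hz : 1 < z) : |I z + Real.log z| ≤ 1 / z := by
  have hz' : 0 < z := by linarith
  rw [I_plus_log hz]
  have h0 : 0 ≤ ∫ u in Ioi (0:ℝ), Real.exp (-u * z) * g u :=
    setIntegral_nonneg measurableSet_Ioi fun u hu => mul_nonneg (Real.exp_pos _).le (g_nonneg hu)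
  have h1 : (∫ u in Ioi (0:ℝ), Real.exp (-u * z) * g u) ≤ ∫ u in Ioi (0:ℝ), Real.exp (-u * z) := by
    refine setIntegral_mono_on (integrable_exp_mul_g hz') (integrable_exp_neg_mul hz')
      measurableSet_Ioi fun u hu => ?_
    nlinarith [g_le_one hu, g_nonneg hu, Real.exp_pos (-u * z)]
  rw [abs_of_nonneg h0]
  rw [integral_exp_neg_mul hz'] at h1
  exact h1

noncomputable def Lg : ℝ → ℝ := fun w => Real.log (Real.Gamma w)

lemma diffLg {z : ℝ} (hz : 0 < z) : DifferentiableAt ℝ Lg z := by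
  have h1 : DifferentiableAt ℝ Real.Gamma z :=
    Real.differentiableAt_Gamma fun m =>
      ne_of_gt (lt_of_le_of_lt (neg_nonpos.mpr (Nat.cast_nonneg m)) hz)
  exact h1.log (Real.Gamma_pos_of_pos hz).ne'

lemma Lg_add_one {w : ℝ} (hw : 0 < w) : Lg (w + 1) = Real.log w + Lg w := by
  rw [Lg, Lg, Real.Gamma_add_one hw.ne',
    Real.log_mul hw.ne' (Real.Gamma_pos_of_pos hw).ne']

lemma psi_rec {z : ℝ} (hz : 0 < z) : deriv Lg (z + 1) = deriv Lg z + 1 / z := by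
  have hdz : HasDerivAt Lg (deriv Lg z) z := (diffLg hz).hasDerivAt
  have hdz1 : HasDerivAt Lg (deriv Lg (z + 1)) (z + 1) := (diffLg (by linarith)).hasDerivAt
  have hcomp : HasDerivAt (fun w => Lg (w + 1)) (deriv Lg (z + 1)) z := by
    have := hdz1.comp z ((hasDerivAt_id z).add_const 1)
    simpa [Function.comp_def] using this
  have hsum : HasDerivAt (fun w => Real.log w + Lg w) (z⁻¹ + deriv Lg z) z :=
    (Real.hasDerivAt_log hz.ne').add hdz
  have heq : (fun w => Lg (w + 1)) =ᶠ[nhds z] fun w => Real.log w + Lg w := by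
    filter_upwards [Ioi_mem_nhds hz] with w hw
    exact Lg_add_one hw
  have h2 : HasDerivAt (fun w => Lg (w + 1)) (z⁻¹ + deriv Lg z) z :=
    hsum.congr_of_eventuallyEq heq
  have := hcomp.unique h2
  rw [this, one_div]
  ring

lemma psi_le {z : ℝ} (hz : 0 < z) : deriv Lg z ≤ Real.log z := by
  have hc : ConvexOn ℝ (Ioi (0:ℝ)) Lg := Real.convexOn_log_Gamma
  have h := hc.deriv_le_slope (mem_Ioi.mpr hz) (mem_Ioi.mpr (by linarith : (0:ℝ) < z + 1))
    (by linarith) (diffLg hz)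
  have hslope : slope Lg z (z + 1) = Real.log z := by
    rw [slope_def_field, Lg_add_one hz]
    field_simp
    ring
  rwa [hslope] at h

lemma le_psi {z : ℝ} (hz : 1 < z) : Real.log (z - 1) ≤ deriv Lg z := by
  have hz' : 0 < z := by linarith
  have hc : ConvexOn ℝ (Ioi (0:ℝ)) Lg := Real.convexOn_log_Gamma
  have h := hc.slope_le_deriv (mem_Ioi.mpr (by linarith : (0:ℝ) < z - 1))
    (mem_Ioi.mpr hz') (by linarith) (diffLg hz')
  have hslope : slope Lg (z - 1) z = Real.log (z - 1) := by
    have : Lg z = Real.log (z - 1) + Lg (z - 1) := by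
      have := Lg_add_one (by linarith : (0:ℝ) < z - 1)
      rwa [sub_add_cancel] at this
    rw [slope_def_field, this]
    field_simp
    ring
  rwa [hslope] at h

lemma tendsto_z_add_n (z : ℝ) : Tendsto (fun n : ℕ => z + (n:ℝ)) atTop atTop :=
  tendsto_atTop_add_const_left atTop z tendsto_natCast_atTop_atTop

lemma tendsto_inv_z_add_n (z : ℝ) : Tendsto (fun n : ℕ => 1 / (z + (n:ℝ))) atTop (𝓝 0) := by
  simp only [one_div]; exact (tendsto_z_add_n z).inv_tendsto_atTop

lemma psi_sub_log_tendsto (z : ℝ) (hz : 0 < z) :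
    Tendsto (fun n : ℕ => deriv Lg (z + n) - Real.log (z + n)) atTop (𝓝 0) := by
  have hlower : Tendsto (fun n : ℕ => Real.log (z + n - 1) - Real.log (z + n)) atTop (𝓝 0) := by
    have h1 : Tendsto (fun n : ℕ => (z + (n:ℝ) - 1) / (z + n)) atTop (𝓝 1) := by
      have h2 : Tendsto (fun n : ℕ => 1 - 1 / (z + (n:ℝ))) atTop (𝓝 (1 - 0)) :=
        tendsto_const_nhds.sub (tendsto_inv_z_add_n z)
      rw [sub_zero] at h2
      refine h2.congr' ?_
      filter_upwards [eventually_ge_atTop 1] with n hn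
      have hzn : (0:ℝ) < z + n := by
        have : (1:ℝ) ≤ (n:ℝ) := by exact_mod_cast hn
        linarith
      field_simp
    have h3 : Tendsto (fun n : ℕ => Real.log ((z + (n:ℝ) - 1) / (z + n))) atTop (𝓝 0) := by
      have := (Real.continuousAt_log one_ne_zero).tendsto.comp h1
      simpa [Function.comp_def] using this
    refine h3.congr' ?_
    filter_upwards [eventually_ge_atTop 2] with n hn
    have hn2 : (2:ℝ) ≤ (n:ℝ) := by exact_mod_cast hn
    rw [Real.log_div (by linarith) (by linarith)]
  refine tendsto_of_tendsto_of_tendsto_of_le_of_le' hlower tendsto_const_nhds ?_ ?_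
  · filter_upwards [eventually_ge_atTop 2] with n hn
    have hn2 : (2:ℝ) ≤ (n:ℝ) := by exact_mod_cast hn
    have h := le_psi (by linarith : 1 < z + n)
    linarith
  · filter_upwards [eventually_ge_atTop 1] with n hn
    have hn1 : (1:ℝ) ≤ (n:ℝ) := by exact_mod_cast hn
    have h := psi_le (by linarith : (0:ℝ) < z + n)
    linarith

lemma I_plus_log_tendsto (z : ℝ) (hz : 0 < z) :
    Tendsto (fun n : ℕ => I (z + n) + Real.log (z + n)) atTop (𝓝 0) := by
  refine squeeze_zero_norm' ?_ (tendsto_inv_z_add_n z)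
  filter_upwards [eventually_ge_atTop 2] with n hn
  have hn2 : (2:ℝ) ≤ (n:ℝ) := by exact_mod_cast hn
  exact I_log_bound (by linarith : 1 < z + n)

lemma psi_add_I (z : ℝ) (hz : 0 < z) : deriv Lg z + I z = 0 := by
  have hper : ∀ n : ℕ, deriv Lg (z + n) + I (z + n) = deriv Lg z + I z := by
    intro n
    induction n with
    | zero => simp
    | succ n ih =>
      have hzn : 0 < z + (n:ℝ) := by positivity
      have h1 := psi_rec hzn
      have h2 := I_rec hzn
      have hcast : z + ((n+1 : ℕ):ℝ) = z + (n:ℝ) + 1 := by push_cast; ring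
      rw [hcast]
      linarith
  have hlim : Tendsto (fun n : ℕ => deriv Lg (z + n) + I (z + n)) atTop (𝓝 0) := by
    have := (psi_sub_log_tendsto z hz).add (I_plus_log_tendsto z hz)
    rw [add_zero] at this
    refine this.congr fun n => by ring
  have hconst : Tendsto (fun _ : ℕ => deriv Lg z + I z) atTop (𝓝 (deriv Lg z + I z)) :=
    tendsto_const_nhds
  have := tendsto_nhds_unique (hlim.congr fun n => hper n) hconst
  linarith [this.symm]

end GaussDigamma


/-- For every real `z > 0`,
`-(d/dz) log Γ(z) = ∫_0^∞ (e^{-uz}/(1 - e^{-u}) - e^{-u}/u) du`. -/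
theorem neg_deriv_log_Gamma_eq_integral (z : ℝ) (hz : 0 < z) :
    -deriv (fun w => Real.log (Real.Gamma w)) z
      = ∫ u in Set.Ioi (0 : ℝ),
          (Real.exp (-u * z) / (1 - Real.exp (-u)) - Real.exp (-u) / u) := by
  have h := GaussDigamma.psi_add_I z hz
  have h2 : GaussDigamma.I z = ∫ u in Set.Ioi (0 : ℝ),
      (Real.exp (-u * z) / (1 - Real.exp (-u)) - Real.exp (-u) / u) := by
    simp only [GaussDigamma.I, GaussDigamma.f]
  have h3 : deriv (fun w => Real.log (Real.Gamma w)) z = deriv GaussDigamma.Lg z := rfl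
  rw [h3, ← h2]
  linarith
end
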